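/- arXiv:1011.2470 — 2 statements merged into one kernel-verified Lean document; each statement's English description precedes it below -/
import Mathlib

section
/- If b is odd, then ∑_{n ≤ X, n even} ψ_{a,b}(n) = (1/2)·Ψ(a,b)·X + O_δ(σ_{-δ}(ab)·X^δ) for any fixed 0 < δ ≤ 1. -/
open Finset

noncomputable def phiStar (n : ℕ) : ℝ := ∏ p ∈ n.primeFactors, (1 - 1 / (p : ℝ))

noncomputable def phiCirc (n : ℕ) : ℝ :=
  ∏ p ∈ n.primeFactors.erase 2, (1 - 1 / ((p : ℝ) - 1))

noncomputable def phiFlat (n : ℕ) : ℝ :=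
  ∏ p ∈ n.primeFactors.erase 2, (1 + 1 / ((p : ℝ) * ((p : ℝ) - 2)))

noncomputable def psiab (a b n : ℕ) : ℝ :=
  if Nat.gcd n b = 1 then (phiCirc (Nat.gcd a n))⁻¹ else 0

noncomputable def PsiMain (a b : ℕ) : ℝ :=
  phiStar b * phiFlat a / phiFlat (Nat.gcd a b)

noncomputable def sigmaNeg (δ : ℝ) (m : ℕ) : ℝ := ∑ k ∈ m.divisors, (k : ℝ) ^ (-δ)

private lemma expand_one_add (s : Finset ℕ) (f : ℕ → ℝ) :
    ∏ p ∈ s, (1 + f p) = ∑ t ∈ s.powerset, ∏ p ∈ t, f p := by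
  have h := Finset.prod_add f (fun _ => (1:ℝ)) s
  simp only [Finset.prod_const_one, mul_one] at h
  rw [← h]; exact Finset.prod_congr rfl fun p _ => add_comm 1 (f p)

private lemma prod_primes_dvd_iff {s : Finset ℕ} (hs : ∀ p ∈ s, p.Prime) (n : ℕ) :
    (∏ p ∈ s, p) ∣ n ↔ ∀ p ∈ s, p ∣ n :=
  ⟨fun h p hp => (Finset.dvd_prod_of_mem _ hp).trans h,
   fun h => Finset.prod_primes_dvd n (fun p hp => (hs p hp).prime) h⟩

private lemma floor_err {δ : ℝ} (hδ : 0 < δ) (hδ' : δ ≤ 1) {y : ℝ} (hy : 0 < y) :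
    |((⌊y⌋₊ : ℝ)) - y| ≤ y ^ δ := by
  rcases le_or_gt 1 y with h | h
  · have h1 : (⌊y⌋₊ : ℝ) ≤ y := Nat.floor_le hy.le
    have h2 : y < (⌊y⌋₊ : ℝ) + 1 := Nat.lt_floor_add_one y
    have h3 : |((⌊y⌋₊ : ℝ)) - y| ≤ 1 := by rw [abs_sub_comm, abs_of_nonneg (by linarith)]; linarith
    exact h3.trans (Real.one_le_rpow h hδ.le)
  · have h0 : ⌊y⌋₊ = 0 := Nat.floor_eq_zero.mpr h
    rw [h0]
    simp only [Nat.cast_zero, zero_sub, abs_neg, abs_of_pos hy]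
    calc y = y ^ (1:ℝ) := (Real.rpow_one y).symm
    _ ≤ y ^ δ := Real.rpow_le_rpow_of_exponent_ge hy h.le hδ'

theorem stmt_5 (δ : ℝ) (hδ : 0 < δ) (hδ' : δ ≤ 1) :
    ∃ C : ℝ, 0 < C ∧ ∀ a b : ℕ, 0 < a → 0 < b → Odd b → ∀ X : ℝ, 1 ≤ X →
      |(∑ n ∈ (Finset.Icc 1 ⌊X⌋₊).filter (fun n => Even n), psiab a b n) -
          (1 / 2) * PsiMain a b * X| ≤
        C * sigmaNeg δ (a * b) * X ^ δ := by
  refine ⟨1, one_pos, ?_⟩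
  intro a b ha hb hodd X hX
  have ha0 : a ≠ 0 := ha.ne'
  have hb0 : b ≠ 0 := hb.ne'
  have hX0 : (0:ℝ) < X := lt_of_lt_of_le one_pos hX
  set N := ⌊X⌋₊ with hNdef
  set A : Finset ℕ := (a.primeFactors.erase 2).filter (fun p => ¬ p ∣ b) with hAdef
  set B : Finset ℕ := b.primeFactors with hBdef
  set Q : Finset ℕ → ℕ := fun s => ∏ p ∈ s, p with hQdef
  set w : Finset ℕ → ℝ := fun s => ∏ p ∈ s, (1/((p:ℝ)-2)) with hwdef
  -- facts about members of A and B
  have hAfact : ∀ p ∈ A, p.Prime ∧ p ∣ a ∧ ¬ p ∣ b ∧ 3 ≤ p := by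
    intro p hp
    rw [hAdef, Finset.mem_filter, Finset.mem_erase, Nat.mem_primeFactors] at hp
    obtain ⟨⟨hp2, hpp, hpa, _⟩, hpb⟩ := hp
    refine ⟨hpp, hpa, hpb, ?_⟩
    rcases hpp.two_le.lt_or_eq with h | h
    · omega
    · omega
  have hBfact : ∀ p ∈ B, p.Prime ∧ p ∣ b ∧ Odd p := by
    intro p hp
    rw [hBdef, Nat.mem_primeFactors] at hp
    obtain ⟨hpp, hpb, _⟩ := hp
    refine ⟨hpp, hpb, hpp.odd_of_ne_two ?_⟩
    rintro rfl
    have h1 := Nat.odd_iff.mp hodd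
    have h2 : b % 2 = 0 := Nat.mod_eq_zero_of_dvd hpb
    omega
  have hQs_dvd_a : ∀ s ⊆ A, Q s ∣ a := by
    intro s hs
    refine (Finset.prod_dvd_prod_of_subset s a.primeFactors (fun p => p) ?_).trans
      (Nat.prod_primeFactors_dvd a)
    intro p hp
    have h := hAfact p (hs hp)
    exact Nat.mem_primeFactors.mpr ⟨h.1, h.2.1, ha0⟩
  have hQt_dvd_b : ∀ t ⊆ B, Q t ∣ b := by
    intro t ht
    exact (Finset.prod_dvd_prod_of_subset t B (fun p => p) ht).trans
      (Nat.prod_primeFactors_dvd b)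
  have hQpos : ∀ s : Finset ℕ, (∀ p ∈ s, p.Prime) → 0 < Q s := by
    intro s hs
    exact Finset.prod_pos fun p hp => (hs p hp).pos
  have hwnn : ∀ s ⊆ A, 0 ≤ w s := by
    intro s hs
    refine Finset.prod_nonneg fun p hp => ?_
    have h3 : 3 ≤ p := (hAfact p (hs hp)).2.2.2
    have h2 : (0:ℝ) < (p:ℝ) - 2 := by
      have : (3:ℝ) ≤ (p:ℝ) := by exact_mod_cast h3
      linarith
    positivity
  have hwle : ∀ s ⊆ A, w s ≤ 1 := by
    intro s hs
    refine Finset.prod_le_one (fun p hp => ?_) (fun p hp => ?_)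
    · have h3 : 3 ≤ p := (hAfact p (hs hp)).2.2.2
      have h2 : (0:ℝ) < (p:ℝ) - 2 := by
        have : (3:ℝ) ≤ (p:ℝ) := by exact_mod_cast h3
        linarith
      positivity
    · have h3 : 3 ≤ p := (hAfact p (hs hp)).2.2.2
      have : (3:ℝ) ≤ (p:ℝ) := by exact_mod_cast h3
      rw [div_le_one (by linarith)]
      linarith
  -- J: coprimality indicator via inclusion-exclusion
  have hJ : ∀ n : ℕ,
      (∑ t ∈ B.powerset, if Q t ∣ n then ((-1:ℝ))^t.card else 0) =
      (if Nat.gcd n b = 1 then (1:ℝ) else 0) := by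
    intro n
    have h1 : ∀ t ∈ B.powerset,
        (if Q t ∣ n then ((-1:ℝ))^t.card else 0) = ∏ p ∈ t, (if p ∣ n then (-1:ℝ) else 0) := by
      intro t ht
      rw [Finset.mem_powerset] at ht
      have htp : ∀ p ∈ t, p.Prime := fun p hp => (hBfact p (ht hp)).1
      by_cases h : ∀ p ∈ t, p ∣ n
      · rw [if_pos ((prod_primes_dvd_iff htp n).mpr h),
          Finset.prod_congr rfl (fun p hp => if_pos (h p hp)), Finset.prod_const]
      · push_neg at h
        obtain ⟨p, hp, hpn⟩ := h
        rw [if_neg (fun hd => hpn ((Finset.dvd_prod_of_mem _ hp).trans hd))]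
        exact (Finset.prod_eq_zero hp (if_neg hpn : (if p ∣ n then (-1:ℝ) else 0) = 0)).symm
    rw [Finset.sum_congr rfl h1, ← expand_one_add]
    by_cases hg : Nat.gcd n b = 1
    · rw [if_pos hg]
      apply Finset.prod_eq_one
      intro p hp
      have hf := hBfact p hp
      have hpn : ¬ p ∣ n := by
        intro hpn
        exact hf.1.ne_one (Nat.dvd_one.mp (hg ▸ Nat.dvd_gcd hpn hf.2.1))
      rw [if_neg hpn, add_zero]
    · rw [if_neg hg]
      obtain ⟨p, hpp, hpd⟩ := Nat.exists_prime_and_dvd hg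
      have hpb : p ∣ b := hpd.trans (Nat.gcd_dvd_right n b)
      have hpn : p ∣ n := hpd.trans (Nat.gcd_dvd_left n b)
      have hpB : p ∈ B := Nat.mem_primeFactors.mpr ⟨hpp, hpb, hb0⟩
      refine Finset.prod_eq_zero hpB ?_
      rw [if_pos hpn]; ring
  -- I: expansion of (phiCirc (gcd a n))⁻¹
  have hI : ∀ n : ℕ, n ≠ 0 → Nat.gcd n b = 1 →
      (phiCirc (Nat.gcd a n))⁻¹ = ∑ s ∈ A.powerset, (if Q s ∣ n then w s else 0) := by
    intro n hn0 hg
    have hGset : (Nat.gcd a n).primeFactors.erase 2 = A.filter (· ∣ n) := by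
      ext p
      rw [Finset.mem_erase, Nat.mem_primeFactors, Finset.mem_filter, hAdef,
        Finset.mem_filter, Finset.mem_erase, Nat.mem_primeFactors]
      constructor
      · rintro ⟨hp2, hpp, hpd, -⟩
        have hpa : p ∣ a := hpd.trans (Nat.gcd_dvd_left a n)
        have hpn : p ∣ n := hpd.trans (Nat.gcd_dvd_right a n)
        have hpb : ¬ p ∣ b := by
          intro hpb
          exact hpp.ne_one (Nat.dvd_one.mp (hg ▸ Nat.dvd_gcd hpn hpb))
        exact ⟨⟨⟨hp2, hpp, hpa, ha0⟩, hpb⟩, hpn⟩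
      · rintro ⟨⟨⟨hp2, hpp, hpa, -⟩, -⟩, hpn⟩
        exact ⟨hp2, hpp, Nat.dvd_gcd hpa hpn, Nat.gcd_ne_zero_left ha0⟩
    have hinv : ∀ p ∈ A.filter (· ∣ n), (1 - 1/((p:ℝ)-1))⁻¹ = 1 + 1/((p:ℝ)-2) := by
      intro p hp
      have h3 : 3 ≤ p := (hAfact p (Finset.mem_filter.mp hp).1).2.2.2
      have h3' : (3:ℝ) ≤ (p:ℝ) := by exact_mod_cast h3
      have h1 : ((p:ℝ) - 1) ≠ 0 := by linarith
      have h2 : ((p:ℝ) - 2) ≠ 0 := by linarith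
      refine inv_eq_of_mul_eq_one_right ?_
      field_simp
      ring
    have hps : A.powerset.filter (fun s => Q s ∣ n) = (A.filter (· ∣ n)).powerset := by
      ext s
      rw [Finset.mem_filter, Finset.mem_powerset, Finset.mem_powerset]
      constructor
      · rintro ⟨hsA, hdvd⟩ p hp
        exact Finset.mem_filter.mpr ⟨hsA hp,
          (prod_primes_dvd_iff (fun q hq => (hAfact q (hsA hq)).1) n).mp hdvd p hp⟩
      · intro h
        have hsub : s ⊆ A := fun p hp => (Finset.mem_filter.mp (h hp)).1
        exact ⟨hsub, (prod_primes_dvd_iff (fun q hq => (hAfact q (hsub hq)).1) n).mpr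
          fun p hp => (Finset.mem_filter.mp (h hp)).2⟩
    calc (phiCirc (Nat.gcd a n))⁻¹
        = (∏ p ∈ A.filter (· ∣ n), (1 - 1/((p:ℝ)-1)))⁻¹ := by rw [phiCirc, hGset]
      _ = ∏ p ∈ A.filter (· ∣ n), (1 - 1/((p:ℝ)-1))⁻¹ := by
            rw [← Finset.prod_inv_distrib]
      _ = ∏ p ∈ A.filter (· ∣ n), (1 + 1/((p:ℝ)-2)) := Finset.prod_congr rfl hinv
      _ = ∑ s ∈ (A.filter (· ∣ n)).powerset, ∏ p ∈ s, 1/((p:ℝ)-2) :=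
            expand_one_add _ _
      _ = ∑ s ∈ A.powerset.filter (fun s => Q s ∣ n), w s := by rw [hps]
      _ = ∑ s ∈ A.powerset, (if Q s ∣ n then w s else 0) := Finset.sum_filter _ _
  -- S as a double sum of counts
  have hS : (∑ n ∈ (Finset.Icc 1 N).filter (fun n => Even n), psiab a b n)
      = ∑ s ∈ A.powerset, ∑ t ∈ B.powerset,
          (w s * (-1:ℝ)^t.card) * ((N / (2 * Q s * Q t) : ℕ) : ℝ) := by
    have hsplit : ∀ n ∈ (Finset.Icc 1 N).filter (fun n => Even n),
        psiab a b n = ∑ s ∈ A.powerset, ∑ t ∈ B.powerset,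
          ((if Q s ∣ n then w s else 0) * (if Q t ∣ n then ((-1:ℝ))^t.card else 0)) := by
      intro n hn
      have hn0 : n ≠ 0 := by
        have := (Finset.mem_filter.mp hn).1
        rw [Finset.mem_Icc] at this
        omega
      rw [← Finset.sum_mul_sum]
      by_cases hg : Nat.gcd n b = 1
      · rw [psiab, if_pos hg, hI n hn0 hg, hJ n, if_pos hg, mul_one]
      · rw [psiab, if_neg hg, hJ n, if_neg hg, mul_zero]
    rw [Finset.sum_congr rfl hsplit, Finset.sum_comm]
    refine Finset.sum_congr rfl (fun s hs => ?_)
    rw [Finset.sum_comm]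
    refine Finset.sum_congr rfl (fun t ht => ?_)
    rw [Finset.mem_powerset] at hs ht
    have hsp : ∀ p ∈ s, p.Prime := fun p hp => (hAfact p (hs hp)).1
    have htp : ∀ p ∈ t, p.Prime := fun p hp => (hBfact p (ht hp)).1
    have hQsb : Nat.Coprime (Q s) b := Nat.coprime_prod_left_iff.mpr
      (fun p hp => ((hAfact p (hs hp)).1.coprime_iff_not_dvd).mpr (hAfact p (hs hp)).2.2.1)
    have hst : Nat.Coprime (Q s) (Q t) := Nat.Coprime.coprime_dvd_right (hQt_dvd_b t ht) hQsb
    have h2s : Nat.Coprime 2 (Q s) := Nat.coprime_prod_right_iff.mpr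
      (fun p hp => Nat.coprime_two_left.mpr ((hsp p hp).odd_of_ne_two (by
        have := (hAfact p (hs hp)).2.2.2; omega)))
    have h2t : Nat.Coprime 2 (Q t) := Nat.coprime_prod_right_iff.mpr
      (fun p hp => Nat.coprime_two_left.mpr (hBfact p (ht hp)).2.2)
    have h2st : Nat.Coprime 2 (Q s * Q t) := Nat.Coprime.mul_right h2s h2t
    have hterm : ∀ n ∈ (Finset.Icc 1 N).filter (fun n => Even n),
        (if Q s ∣ n then w s else 0) * (if Q t ∣ n then ((-1:ℝ))^t.card else 0)
        = (w s * (-1:ℝ)^t.card) * (if Q s ∣ n ∧ Q t ∣ n then (1:ℝ) else 0) := by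
      intro n _
      by_cases h1 : Q s ∣ n <;> by_cases h2 : Q t ∣ n <;> simp [h1, h2]
    rw [Finset.sum_congr rfl hterm, ← Finset.mul_sum]
    congr 1
    rw [Finset.sum_boole]
    have hset : ((Finset.Icc 1 N).filter (fun n => Even n)).filter
        (fun n => Q s ∣ n ∧ Q t ∣ n)
        = (Finset.Ioc 0 N).filter (fun n => 2 * Q s * Q t ∣ n) := by
      rw [Finset.filter_filter]
      rw [show Finset.Icc 1 N = Finset.Ioc 0 N from Finset.Icc_add_one_left_eq_Ioc 0 N]
      refine Finset.filter_congr (fun n _ => ?_)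
      constructor
      · rintro ⟨hev, hd1, hd2⟩
        have h2n : 2 ∣ n := even_iff_two_dvd.mp hev
        have hq : Q s * Q t ∣ n := hst.mul_dvd_of_dvd_of_dvd hd1 hd2
        have h := h2st.mul_dvd_of_dvd_of_dvd h2n hq
        rwa [← mul_assoc] at h
      · intro h
        exact ⟨even_iff_two_dvd.mpr (dvd_trans ⟨Q s * Q t, by ring⟩ h),
          dvd_trans ⟨2 * Q t, by ring⟩ h, dvd_trans ⟨2 * Q s, by ring⟩ h⟩
    rw [hset, Nat.Ioc_filter_dvd_card_eq_div]
  -- main term identity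
  have hgcdset : (Nat.gcd a b).primeFactors.erase 2
      = (a.primeFactors.erase 2).filter (fun p => p ∣ b) := by
    ext p
    rw [Finset.mem_erase, Nat.mem_primeFactors, Finset.mem_filter, Finset.mem_erase,
      Nat.mem_primeFactors]
    constructor
    · rintro ⟨hp2, hpp, hpd, -⟩
      exact ⟨⟨hp2, hpp, hpd.trans (Nat.gcd_dvd_left a b), ha0⟩,
        hpd.trans (Nat.gcd_dvd_right a b)⟩
    · rintro ⟨⟨hp2, hpp, hpa, -⟩, hpb⟩
      exact ⟨hp2, hpp, Nat.dvd_gcd hpa hpb, Nat.gcd_ne_zero_left ha0⟩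
  have hposflat : ∀ p ∈ a.primeFactors.erase 2, (0:ℝ) < 1 + 1/((p:ℝ)*((p:ℝ)-2)) := by
    intro p hp
    rw [Finset.mem_erase, Nat.mem_primeFactors] at hp
    have h3 : 3 ≤ p := by
      have h2 := hp.2.1.two_le
      have hne : p ≠ 2 := hp.1
      omega
    have h3' : (3:ℝ) ≤ (p:ℝ) := by exact_mod_cast h3
    have hpos : (0:ℝ) < (p:ℝ)*((p:ℝ)-2) := by nlinarith
    positivity
  have hflat : phiFlat a / phiFlat (Nat.gcd a b) = ∏ p ∈ A, (1 + 1/((p:ℝ)*((p:ℝ)-2))) := by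
    rw [phiFlat, phiFlat, hgcdset,
      ← Finset.prod_filter_mul_prod_filter_not (a.primeFactors.erase 2) (fun p => p ∣ b)
        (fun p => (1 + 1/((p:ℝ)*((p:ℝ)-2))))]
    have hne : (∏ p ∈ (a.primeFactors.erase 2).filter (fun p => p ∣ b),
        (1 + 1/((p:ℝ)*((p:ℝ)-2)))) ≠ 0 :=
      ne_of_gt (Finset.prod_pos fun p hp => hposflat p (Finset.mem_filter.mp hp).1)
    rw [mul_comm, mul_div_assoc, div_self hne, mul_one]
  have hstar : phiStar b = ∑ t ∈ B.powerset, ((-1:ℝ))^t.card / ((Q t : ℕ) : ℝ) := by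
    rw [phiStar, Finset.prod_congr rfl (fun p (_ : p ∈ b.primeFactors) =>
      (by ring : (1 - 1/(p:ℝ)) = 1 + (-(1/(p:ℝ))))), expand_one_add]
    refine Finset.sum_congr rfl (fun t ht => ?_)
    calc ∏ p ∈ t, (-(1/(p:ℝ)))
        = ∏ p ∈ t, ((-1) * (1/(p:ℝ))) := Finset.prod_congr rfl (fun p _ => by ring)
      _ = (∏ p ∈ t, (-1:ℝ)) * ∏ p ∈ t, (1/(p:ℝ)) := Finset.prod_mul_distrib
      _ = ((-1:ℝ))^t.card * ((∏ p ∈ t, (1:ℝ)) / (∏ p ∈ t, (p:ℝ))) := by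
          rw [Finset.prod_const, Finset.prod_div_distrib]
      _ = ((-1:ℝ))^t.card / ((Q t : ℕ) : ℝ) := by
          rw [Finset.prod_const_one, Nat.cast_prod, mul_one_div]
  have hAflatsum : ∏ p ∈ A, (1 + 1/((p:ℝ)*((p:ℝ)-2)))
      = ∑ s ∈ A.powerset, w s / ((Q s : ℕ) : ℝ) := by
    rw [expand_one_add]
    refine Finset.sum_congr rfl (fun s hs => ?_)
    calc ∏ p ∈ s, 1/((p:ℝ)*((p:ℝ)-2))
        = ∏ p ∈ s, (1/((p:ℝ)-2) / (p:ℝ)) :=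
          Finset.prod_congr rfl (fun p _ => by rw [div_div, mul_comm])
      _ = (∏ p ∈ s, 1/((p:ℝ)-2)) / (∏ p ∈ s, (p:ℝ)) := Finset.prod_div_distrib _ _
      _ = w s / ((Q s : ℕ) : ℝ) := by rw [Nat.cast_prod]
  have hM : (1/2) * PsiMain a b * X = ∑ s ∈ A.powerset, ∑ t ∈ B.powerset,
      (w s * (-1:ℝ)^t.card) * (X / ((2 * Q s * Q t : ℕ) : ℝ)) := by
    have expand : ∑ s ∈ A.powerset, ∑ t ∈ B.powerset,
        (w s * (-1:ℝ)^t.card) * (X / ((2 * Q s * Q t : ℕ) : ℝ))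
        = (∑ s ∈ A.powerset, w s / ((Q s :ℕ):ℝ)) *
          (∑ t ∈ B.powerset, ((-1:ℝ))^t.card / ((Q t :ℕ):ℝ)) * (X/2) := by
      rw [Finset.sum_mul_sum, Finset.sum_mul]
      refine Finset.sum_congr rfl (fun s hs => ?_)
      rw [Finset.sum_mul]
      refine Finset.sum_congr rfl (fun t ht => ?_)
      have hc : ((2 * Q s * Q t : ℕ) : ℝ) = 2 * ((Q s : ℕ):ℝ) * ((Q t : ℕ):ℝ) := by push_cast; ring
      rw [hc]
      ring
    rw [expand, PsiMain, ← hstar, ← hAflatsum, ← hflat]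
    ring
  -- characterize memberships for injectivity
  have hmemS : ∀ (u v : Finset ℕ), u ⊆ A → v ⊆ B → ∀ p : ℕ,
      (p ∈ u ↔ (p.Prime ∧ p ∣ Q u * Q v ∧ ¬ p ∣ b)) := by
    intro u v hu hv p
    constructor
    · intro hp
      exact ⟨(hAfact p (hu hp)).1,
        (Finset.dvd_prod_of_mem _ hp).trans (dvd_mul_right _ _),
        (hAfact p (hu hp)).2.2.1⟩
    · rintro ⟨hpp, hpd, hpb⟩
      rcases (Nat.Prime.dvd_mul hpp).mp hpd with h | h
      · obtain ⟨q, hq, hpq⟩ := hpp.prime.exists_mem_finset_dvd h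
        rwa [(Nat.prime_dvd_prime_iff_eq hpp (hAfact q (hu hq)).1).mp hpq]
      · obtain ⟨q, hq, hpq⟩ := hpp.prime.exists_mem_finset_dvd h
        have := (Nat.prime_dvd_prime_iff_eq hpp (hBfact q (hv hq)).1).mp hpq
        exact absurd (this ▸ (hBfact q (hv hq)).2.1) hpb
  have hmemT : ∀ (u v : Finset ℕ), u ⊆ A → v ⊆ B → ∀ p : ℕ,
      (p ∈ v ↔ (p.Prime ∧ p ∣ Q u * Q v ∧ p ∣ b)) := by
    intro u v hu hv p
    constructor
    · intro hp
      exact ⟨(hBfact p (hv hp)).1,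
        (Finset.dvd_prod_of_mem _ hp).trans (dvd_mul_left (Q v) (Q u)),
        (hBfact p (hv hp)).2.1⟩
    · rintro ⟨hpp, hpd, hpb⟩
      rcases (Nat.Prime.dvd_mul hpp).mp hpd with h | h
      · obtain ⟨q, hq, hpq⟩ := hpp.prime.exists_mem_finset_dvd h
        have := (Nat.prime_dvd_prime_iff_eq hpp (hAfact q (hu hq)).1).mp hpq
        exact absurd hpb (this ▸ (hAfact q (hu hq)).2.2.1)
      · obtain ⟨q, hq, hpq⟩ := hpp.prime.exists_mem_finset_dvd h
        rwa [(Nat.prime_dvd_prime_iff_eq hpp (hBfact q (hv hq)).1).mp hpq]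
  have hT : ∑ s ∈ A.powerset, ∑ t ∈ B.powerset, ((Q s * Q t : ℕ):ℝ)^(-δ)
      ≤ sigmaNeg δ (a*b) := by
    rw [← Finset.sum_product']
    have hinj : ∀ x ∈ A.powerset ×ˢ B.powerset, ∀ y ∈ A.powerset ×ˢ B.powerset,
        Q x.1 * Q x.2 = Q y.1 * Q y.2 → x = y := by
      rintro ⟨s, t⟩ hx ⟨s', t'⟩ hy h
      rw [Finset.mem_product, Finset.mem_powerset, Finset.mem_powerset] at hx hy
      obtain ⟨hs, ht⟩ := hx
      obtain ⟨hs', ht'⟩ := hy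
      have h1 : s = s' := by
        ext p
        rw [hmemS s t hs ht p, hmemS s' t' hs' ht' p, h]
      have h2 : t = t' := by
        ext p
        rw [hmemT s t hs ht p, hmemT s' t' hs' ht' p, h]
      exact Prod.ext h1 h2
    have heq : ∑ x ∈ A.powerset ×ˢ B.powerset, ((Q x.1 * Q x.2 : ℕ):ℝ)^(-δ)
        = ∑ k ∈ (A.powerset ×ˢ B.powerset).image (fun x => Q x.1 * Q x.2),
            ((k : ℕ):ℝ)^(-δ) :=
      (Finset.sum_image (f := fun k : ℕ => ((k:ℝ))^(-δ)) hinj).symm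
    rw [heq, sigmaNeg]
    refine Finset.sum_le_sum_of_subset_of_nonneg ?_
      (fun k _ _ => Real.rpow_nonneg (Nat.cast_nonneg k) _)
    intro k hk
    simp only [Finset.mem_image] at hk
    obtain ⟨⟨s, t⟩, hst, rfl⟩ := hk
    rw [Finset.mem_product, Finset.mem_powerset, Finset.mem_powerset] at hst
    rw [Nat.mem_divisors]
    exact ⟨mul_dvd_mul (hQs_dvd_a s hst.1) (hQt_dvd_b t hst.2), mul_ne_zero ha0 hb0⟩
  -- pointwise bound
  have hbound : ∀ s ∈ A.powerset, ∀ t ∈ B.powerset,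
      |(w s * (-1:ℝ)^t.card) * (((N / (2*Q s*Q t) : ℕ):ℝ) - X / ((2*Q s*Q t : ℕ):ℝ))|
      ≤ X ^ δ * ((Q s * Q t : ℕ) : ℝ) ^ (-δ) := by
    intro s hs t ht
    rw [Finset.mem_powerset] at hs ht
    have hsp : ∀ p ∈ s, p.Prime := fun p hp => (hAfact p (hs hp)).1
    have htp : ∀ p ∈ t, p.Prime := fun p hp => (hBfact p (ht hp)).1
    have hqs : 0 < Q s := hQpos s hsp
    have hqt : 0 < Q t := hQpos t htp
    have hkpos : 0 < 2 * Q s * Q t := by positivity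
    have hkr : (0:ℝ) < ((2 * Q s * Q t : ℕ):ℝ) := by exact_mod_cast hkpos
    have hy : (0:ℝ) < X / ((2 * Q s * Q t : ℕ):ℝ) := by positivity
    have hfl : (N / (2 * Q s * Q t) : ℕ) = ⌊X / ((2 * Q s * Q t : ℕ):ℝ)⌋₊ := by
      rw [hNdef, ← Nat.floor_div_natCast]
    have herr : |((N / (2*Q s*Q t) : ℕ):ℝ) - X / ((2*Q s*Q t : ℕ):ℝ)|
        ≤ (X / ((2*Q s*Q t : ℕ):ℝ)) ^ δ := by
      rw [hfl]
      exact floor_err hδ hδ' hy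
    have habs : |(w s * (-1:ℝ)^t.card)| ≤ 1 := by
      rw [abs_mul, abs_pow, abs_neg, abs_one, one_pow, mul_one, abs_of_nonneg (hwnn s hs)]
      exact hwle s hs
    have hqq : (0:ℝ) < ((Q s * Q t : ℕ):ℝ) := by exact_mod_cast Nat.mul_pos hqs hqt
    have hle : ((Q s * Q t : ℕ):ℝ) ≤ ((2 * Q s * Q t : ℕ):ℝ) := by
      have : Q s * Q t ≤ 2 * Q s * Q t := by nlinarith
      exact_mod_cast this
    have hrpow : (X / ((2*Q s*Q t : ℕ):ℝ)) ^ δ ≤ X ^ δ * ((Q s * Q t : ℕ) : ℝ) ^ (-δ) := by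
      rw [Real.div_rpow hX0.le hkr.le, Real.rpow_neg hqq.le, ← div_eq_mul_inv]
      exact div_le_div_of_nonneg_left (Real.rpow_nonneg hX0.le δ)
        (Real.rpow_pos_of_pos hqq δ) (Real.rpow_le_rpow hqq.le hle hδ.le)
    calc |(w s * (-1:ℝ)^t.card) * (((N / (2*Q s*Q t) : ℕ):ℝ) - X / ((2*Q s*Q t : ℕ):ℝ))|
        = |(w s * (-1:ℝ)^t.card)| *
            |(((N / (2*Q s*Q t) : ℕ):ℝ) - X / ((2*Q s*Q t : ℕ):ℝ))| := abs_mul _ _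
      _ ≤ 1 * ((X / ((2*Q s*Q t : ℕ):ℝ)) ^ δ) :=
          mul_le_mul habs herr (abs_nonneg _) zero_le_one
      _ = (X / ((2*Q s*Q t : ℕ):ℝ)) ^ δ := one_mul _
      _ ≤ X ^ δ * ((Q s * Q t : ℕ) : ℝ) ^ (-δ) := hrpow
  -- put it together
  rw [hS, hM]
  have hdiff : (∑ s ∈ A.powerset, ∑ t ∈ B.powerset,
        (w s * (-1:ℝ)^t.card) * ((N / (2*Q s*Q t) : ℕ):ℝ))
      - (∑ s ∈ A.powerset, ∑ t ∈ B.powerset,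
        (w s * (-1:ℝ)^t.card) * (X / ((2*Q s*Q t : ℕ):ℝ)))
      = ∑ s ∈ A.powerset, ∑ t ∈ B.powerset, (w s * (-1:ℝ)^t.card) *
          (((N / (2*Q s*Q t) : ℕ):ℝ) - X / ((2*Q s*Q t : ℕ):ℝ)) := by
    rw [← Finset.sum_sub_distrib]
    refine Finset.sum_congr rfl (fun s _ => ?_)
    rw [← Finset.sum_sub_distrib]
    exact Finset.sum_congr rfl (fun t _ => by ring)
  rw [hdiff]
  calc |∑ s ∈ A.powerset, ∑ t ∈ B.powerset, (w s * (-1:ℝ)^t.card) *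
          (((N / (2*Q s*Q t) : ℕ):ℝ) - X / ((2*Q s*Q t : ℕ):ℝ))|
      ≤ ∑ s ∈ A.powerset, |∑ t ∈ B.powerset, (w s * (-1:ℝ)^t.card) *
          (((N / (2*Q s*Q t) : ℕ):ℝ) - X / ((2*Q s*Q t : ℕ):ℝ))| :=
        Finset.abs_sum_le_sum_abs _ _
    _ ≤ ∑ s ∈ A.powerset, ∑ t ∈ B.powerset, |(w s * (-1:ℝ)^t.card) *
          (((N / (2*Q s*Q t) : ℕ):ℝ) - X / ((2*Q s*Q t : ℕ):ℝ))| :=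
        Finset.sum_le_sum (fun s _ => Finset.abs_sum_le_sum_abs _ _)
    _ ≤ ∑ s ∈ A.powerset, ∑ t ∈ B.powerset, X ^ δ * ((Q s * Q t : ℕ) : ℝ) ^ (-δ) :=
        Finset.sum_le_sum (fun s hs => Finset.sum_le_sum (fun t ht => hbound s hs t ht))
    _ = X ^ δ * ∑ s ∈ A.powerset, ∑ t ∈ B.powerset, ((Q s * Q t : ℕ) : ℝ) ^ (-δ) := by
        simp_rw [← Finset.mul_sum]
    _ ≤ X ^ δ * sigmaNeg δ (a*b) :=
        mul_le_mul_of_nonneg_left hT (Real.rpow_nonneg hX0.le δ)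
    _ = 1 * sigmaNeg δ (a*b) * X ^ δ := by ring
end

section
/- For a, b, c positive integers, ∑_{k|a, gcd(k,c)=1} μ(k)/(k·φ*(kb)) = φ*(gcd(a,b))/(φ*(b)·φ*(gcd(a,b,c))) · ∏_{p|a, p∤bc}(1 − 1/(p−1)), where the sum is over squarefree divisors (μ vanishes otherwise). -/
open Finset

lemma one_sub_inv_pos {p : ℕ} (hp : p.Prime) : (0:ℝ) < 1 - 1 / (p : ℝ) := by
  have h2 : (2:ℝ) ≤ p := by exact_mod_cast hp.two_le
  have hp0 : (0:ℝ) < p := by linarith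
  rw [sub_pos, div_lt_one hp0]
  linarith

lemma phiStar_pos (n : ℕ) : 0 < phiStar n :=
  Finset.prod_pos fun p hp => one_sub_inv_pos (Nat.prime_of_mem_primeFactors hp)

lemma squarefree_prod_primes {T : Finset ℕ} (h : ∀ p ∈ T, p.Prime) :
    Squarefree (∏ p ∈ T, p) := by
  classical
  induction T using Finset.induction_on with
  | empty => simpa using squarefree_one
  | insert _ _ ha ih =>
    rename_i q s
    rw [Finset.prod_insert ha]
    have hq := h q (Finset.mem_insert_self q s)
    have hcop : Nat.Coprime q (∏ p ∈ s, p) := by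
      apply Nat.Coprime.prod_right
      intro p hp
      exact (Nat.coprime_primes hq (h p (Finset.mem_insert_of_mem hp))).mpr
        (fun hqp => ha (hqp ▸ hp))
    rw [Nat.squarefree_mul hcop]
    exact ⟨hq.squarefree, ih fun p hp => h p (Finset.mem_insert_of_mem hp)⟩

noncomputable def gfun (b : ℕ) (p : ℕ) : ℝ :=
  (-1 / (p:ℝ)) * (if p ∈ b.primeFactors then 1 else (1 - 1/(p:ℝ))⁻¹)

lemma prod_gfun (b : ℕ) (P : Finset ℕ) :
    ∏ p ∈ P, gfun b p =
      ((-1)^P.card / ∏ p ∈ P, (p:ℝ)) *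
        (∏ p ∈ P \ b.primeFactors, (1 - 1/(p:ℝ)))⁻¹ := by
  classical
  unfold gfun
  rw [Finset.prod_mul_distrib]
  congr 1
  · rw [show (fun p : ℕ => (-1 / (p:ℝ))) = fun p : ℕ => (-1) * ((p:ℝ))⁻¹ by
      funext p; ring]
    rw [Finset.prod_mul_distrib, Finset.prod_const, Finset.prod_inv_distrib,
      div_eq_mul_inv]
  · rw [Finset.sdiff_eq_filter, ← Finset.prod_inv_distrib, Finset.prod_filter]
    apply Finset.prod_congr rfl
    intro p _
    by_cases hp : p ∈ b.primeFactors <;> simp [hp]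

theorem stmt_14 (a b c : ℕ) (ha : 0 < a) (hb : 0 < b) (hc : 0 < c) :
    ∑ k ∈ a.divisors.filter (fun k => Nat.gcd k c = 1),
        (ArithmeticFunction.moebius k : ℝ) / (k * phiStar (k * b)) =
      phiStar (Nat.gcd a b) / (phiStar b * phiStar (Nat.gcd a (Nat.gcd b c))) *
        ∏ p ∈ a.primeFactors \ (b * c).primeFactors, (1 - 1 / ((p : ℝ) - 1)) := by
  classical
  have ha0 : a ≠ 0 := ha.ne'
  have hb0 : b ≠ 0 := hb.ne'
  have hc0 : c ≠ 0 := hc.ne'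
  set Pa := a.primeFactors with hPa
  set Pb := b.primeFactors with hPb
  set Pc := c.primeFactors with hPc
  set S : Finset ℕ := Pa \ Pc with hS
  -- Step A: restrict to squarefree
  have stepA : ∑ k ∈ a.divisors.filter (fun k => Nat.gcd k c = 1),
        (ArithmeticFunction.moebius k : ℝ) / (k * phiStar (k * b)) =
      ∑ k ∈ (a.divisors.filter (fun k => Nat.gcd k c = 1)).filter Squarefree,
        (ArithmeticFunction.moebius k : ℝ) / (k * phiStar (k * b)) := by
    refine (Finset.sum_filter_of_ne ?_).symm
    intro k hk hne
    by_contra hsq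
    have h0 : ArithmeticFunction.moebius k = 0 := by
      by_contra h0
      exact hsq (ArithmeticFunction.moebius_ne_zero_iff_squarefree.mp h0)
    apply hne
    rw [h0]
    simp
  -- Step B: bijection with powerset of S
  have stepB : ∑ k ∈ (a.divisors.filter (fun k => Nat.gcd k c = 1)).filter Squarefree,
        (ArithmeticFunction.moebius k : ℝ) / (k * phiStar (k * b)) =
      ∑ T ∈ S.powerset, (∏ p ∈ T, gfun b p) / phiStar b := by
    refine Finset.sum_nbij' (fun k => k.primeFactors) (fun T => ∏ p ∈ T, p) ?_ ?_ ?_ ?_ ?_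
    · intro k hk
      simp only [Finset.mem_filter, Nat.mem_divisors] at hk
      obtain ⟨⟨⟨hka, _⟩, hkc⟩, hsq⟩ := hk
      rw [Finset.mem_powerset, hS]
      intro p hp
      rw [Finset.mem_sdiff]
      refine ⟨Nat.primeFactors_mono hka ha0 hp, ?_⟩
      intro hpc
      have hp' := Nat.prime_of_mem_primeFactors hp
      have h1 : p ∣ Nat.gcd k c :=
        Nat.dvd_gcd (Nat.dvd_of_mem_primeFactors hp) (Nat.dvd_of_mem_primeFactors hpc)
      rw [hkc] at h1
      exact hp'.one_lt.ne' (Nat.eq_one_of_dvd_one h1)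
    · intro T hT
      rw [Finset.mem_powerset, hS] at hT
      have hTp : ∀ p ∈ T, p.Prime := fun p hp =>
        Nat.prime_of_mem_primeFactors ((Finset.mem_sdiff.mp (hT hp)).1)
      simp only [Finset.mem_filter, Nat.mem_divisors]
      refine ⟨⟨⟨?_, ha0⟩, ?_⟩, squarefree_prod_primes hTp⟩
      · exact Finset.prod_primes_dvd a (fun p hp => (hTp p hp).prime)
          (fun p hp => Nat.dvd_of_mem_primeFactors (Finset.mem_sdiff.mp (hT hp)).1)
      · apply Nat.Coprime.prod_left
        intro p hp
        have hnc := (Finset.mem_sdiff.mp (hT hp)).2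
        rw [(hTp p hp).coprime_iff_not_dvd]
        intro hdvd
        exact hnc (Nat.mem_primeFactors.mpr ⟨hTp p hp, hdvd, hc0⟩)
    · intro k hk
      simp only [Finset.mem_filter] at hk
      exact Nat.prod_primeFactors_of_squarefree hk.2
    · intro T hT
      rw [Finset.mem_powerset, hS] at hT
      exact Nat.primeFactors_prod (fun p hp =>
        Nat.prime_of_mem_primeFactors ((Finset.mem_sdiff.mp (hT hp)).1))
    · intro k hk
      simp only [Finset.mem_filter, Nat.mem_divisors] at hk
      obtain ⟨⟨⟨hka, _⟩, hkc⟩, hsq⟩ := hk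
      have hk0 : k ≠ 0 := hsq.ne_zero
      have hkprod : ∏ p ∈ k.primeFactors, (p:ℝ) = (k:ℝ) := by
        rw [← Nat.cast_prod, Nat.prod_primeFactors_of_squarefree hsq]
      have hmuZ : ArithmeticFunction.moebius k = (-1) ^ k.primeFactors.card := by
        conv_lhs => rw [← Nat.prod_primeFactors_of_squarefree hsq]
        rw [ArithmeticFunction.IsMultiplicative.map_prod_of_prime
          ArithmeticFunction.isMultiplicative_moebius _
          (fun p hp => Nat.prime_of_mem_primeFactors hp),
          Finset.prod_congr rfl (fun p hp => ArithmeticFunction.moebius_apply_prime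
            (Nat.prime_of_mem_primeFactors hp)), Finset.prod_const]
      have hmu : (ArithmeticFunction.moebius k : ℝ) = (-1) ^ k.primeFactors.card := by
        rw [hmuZ]; push_cast; ring
      have hpf : (k * b).primeFactors = Pb ∪ (k.primeFactors \ Pb) := by
        rw [Nat.primeFactors_mul hk0 hb0, hPb, Finset.union_comm,
          Finset.union_sdiff_self_eq_union, Finset.union_comm]
      have hphikb : phiStar (k * b) =
          phiStar b * ∏ p ∈ k.primeFactors \ Pb, (1 - 1/(p:ℝ)) := by
        rw [phiStar, hpf, Finset.prod_union Finset.disjoint_sdiff]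
        rfl
      rw [prod_gfun, hphikb, hkprod, hmu]
      have hQ : (0:ℝ) < ∏ p ∈ k.primeFactors \ Pb, (1 - 1/(p:ℝ)) :=
        Finset.prod_pos fun p hp =>
          one_sub_inv_pos (Nat.prime_of_mem_primeFactors (Finset.mem_sdiff.mp hp).1)
      have hkR : (k:ℝ) ≠ 0 := Nat.cast_ne_zero.mpr hk0
      have hpb := (phiStar_pos b).ne'
      field_simp
      rw [← hPb]; exact (mul_inv_cancel₀ (by simpa only [one_div] using hQ.ne')).symm
  -- Step C: sum over powerset = product
  have stepC : ∑ T ∈ S.powerset, ∏ p ∈ T, gfun b p = ∏ p ∈ S, (gfun b p + 1) := by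
    rw [Finset.prod_add]
    apply Finset.sum_congr rfl
    intro T _
    simp
  -- Step D: split the product
  have stepD : ∏ p ∈ S, (gfun b p + 1) =
      (∏ p ∈ S ∩ Pb, (1 - 1/(p:ℝ))) * ∏ p ∈ S \ Pb, (1 - 1/((p:ℝ) - 1)) := by
    rw [← Finset.prod_inter_mul_prod_diff S Pb]
    congr 1
    · apply Finset.prod_congr rfl
      intro p hp
      have hpmem := (Finset.mem_inter.mp hp).2
      unfold gfun
      rw [if_pos hpmem]
      ring
    · apply Finset.prod_congr rfl
      intro p hp
      obtain ⟨hpS, hpb⟩ := Finset.mem_sdiff.mp hp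
      have hprime : p.Prime := Nat.prime_of_mem_primeFactors ((Finset.mem_sdiff.mp hpS).1)
      have h2 : (2:ℝ) ≤ p := by exact_mod_cast hprime.two_le
      have hp0 : (p:ℝ) ≠ 0 := by linarith
      have hp1 : (p:ℝ) - 1 ≠ 0 := by linarith
      have hne := (one_sub_inv_pos hprime).ne'
      unfold gfun
      rw [if_neg hpb]
      field_simp
      ring
  -- RHS rewriting
  have hbc : (b * c).primeFactors = Pb ∪ Pc := Nat.primeFactors_mul hb0 hc0
  have hsdiff : Pa \ (b * c).primeFactors = S \ Pb := by
    rw [hbc, hS]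
    ext p
    simp only [Finset.mem_sdiff, Finset.mem_union]
    tauto
  have hgab : (Nat.gcd a b).primeFactors = Pa ∩ Pb := Nat.primeFactors_gcd ha0 hb0
  have hgabc : (Nat.gcd a (Nat.gcd b c)).primeFactors = Pa ∩ (Pb ∩ Pc) := by
    rw [Nat.primeFactors_gcd ha0 (Nat.gcd_ne_zero_left hb0),
      Nat.primeFactors_gcd hb0 hc0]
  have hsub : Pa ∩ (Pb ∩ Pc) ⊆ Pa ∩ Pb := by
    intro p hp
    simp only [Finset.mem_inter] at hp ⊢
    exact ⟨hp.1, hp.2.1⟩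
  have hsplit : phiStar (Nat.gcd a b) =
      phiStar (Nat.gcd a (Nat.gcd b c)) * ∏ p ∈ (Pa ∩ Pb) \ (Pa ∩ (Pb ∩ Pc)), (1 - 1/(p:ℝ)) := by
    rw [phiStar, phiStar, hgab, hgabc, ← Finset.prod_sdiff hsub, mul_comm]
  have hset2 : (Pa ∩ Pb) \ (Pa ∩ (Pb ∩ Pc)) = S ∩ Pb := by
    rw [hS]
    ext p
    simp only [Finset.mem_sdiff, Finset.mem_inter]
    tauto
  -- put it together
  rw [stepA, stepB, ← Finset.sum_div, stepC, stepD, hsdiff, hsplit, hset2]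
  have h1 := (phiStar_pos b).ne'
  have h2 := (phiStar_pos (Nat.gcd a (Nat.gcd b c))).ne'
  field_simp
end
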